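/- Explicit solution with parameter ε: for any constant ε, the functions R(τ,μ) = √2·√(μ²+ε)/τ, ζ(τ,μ) = −(μ²+ε/3)/τ³, κ(τ,μ) = (μ³+εμ)/τ⁴, defined where τ ≠ 0 and μ²+ε > 0, satisfy ∂_τζ = (1/2)((∂_τR)² + R²(∂_μR)²), ∂_μζ = ∂_τR·∂_μR, ∂_μκ = ∂_τζ, ∂_τκ = R²·∂_μζ. -/

import Mathlib

noncomputable def pd1 (f : ℝ × ℝ → ℝ) (p : ℝ × ℝ) : ℝ := fderiv ℝ f p (1, 0)
noncomputable def pd2 (f : ℝ × ℝ → ℝ) (p : ℝ × ℝ) : ℝ := fderiv ℝ f p (0, 1)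

lemma pd_mul {u v : ℝ → ℝ} {u' v' : ℝ} {p : ℝ × ℝ}
    (hu : HasDerivAt u u' p.1) (hv : HasDerivAt v v' p.2) :
    pd1 (fun q : ℝ × ℝ => u q.1 * v q.2) p = u' * v p.2 ∧
    pd2 (fun q : ℝ × ℝ => u q.1 * v q.2) p = u p.1 * v' := by
  have h1 : HasFDerivAt (fun q : ℝ × ℝ => u q.1)
      (u' • (ContinuousLinearMap.fst ℝ ℝ ℝ)) p :=
    hu.comp_hasFDerivAt p hasFDerivAt_fst
  have h2 : HasFDerivAt (fun q : ℝ × ℝ => v q.2)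
      (v' • (ContinuousLinearMap.snd ℝ ℝ ℝ)) p :=
    hv.comp_hasFDerivAt p hasFDerivAt_snd
  have h : HasFDerivAt (fun q : ℝ × ℝ => u q.1 * v q.2) _ p := h1.mul h2
  constructor
  · rw [pd1, h.fderiv]; simp; try ring
  · rw [pd2, h.fderiv]; simp; try ring

theorem stmt_13 (ε : ℝ) :
    let R : ℝ × ℝ → ℝ := fun p => Real.sqrt 2 * Real.sqrt (p.2 ^ 2 + ε) / p.1
    let Z : ℝ × ℝ → ℝ := fun p => -((p.2 ^ 2 + ε / 3) / p.1 ^ 3)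
    let K : ℝ × ℝ → ℝ := fun p => (p.2 ^ 3 + ε * p.2) / p.1 ^ 4
    ∀ p : ℝ × ℝ, p.1 ≠ 0 → p.2 ^ 2 + ε > 0 →
      pd1 Z p = (1 / 2) * ((pd1 R p) ^ 2 + (R p) ^ 2 * (pd2 R p) ^ 2) ∧
      pd2 Z p = pd1 R p * pd2 R p ∧
      pd2 K p = pd1 Z p ∧
      pd1 K p = (R p) ^ 2 * pd2 Z p := by
  intro R Z K p hx hpos
  obtain ⟨x, y⟩ := p
  simp only at hx hpos
  have hs : y ^ 2 + ε ≠ 0 := ne_of_gt hpos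
  have hsq : Real.sqrt (y ^ 2 + ε) ^ 2 = y ^ 2 + ε := Real.sq_sqrt hpos.le
  have hsne : Real.sqrt (y ^ 2 + ε) ≠ 0 := by
    positivity
  have h2 : Real.sqrt 2 ^ 2 = 2 := Real.sq_sqrt (by norm_num)
  -- derivative facts
  have hinner : HasDerivAt (fun t : ℝ => t ^ 2 + ε) (2 * y) y := by
    simpa using (hasDerivAt_pow 2 y).add_const ε
  have hvR : HasDerivAt (fun t : ℝ => Real.sqrt 2 * Real.sqrt (t ^ 2 + ε))
      (Real.sqrt 2 * (1 / (2 * Real.sqrt (y ^ 2 + ε)) * (2 * y))) y :=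
    ((Real.hasDerivAt_sqrt hs).comp y hinner).const_mul _
  have huR : HasDerivAt (fun t : ℝ => t⁻¹) (-(x ^ 2)⁻¹) x := hasDerivAt_inv hx
  have huZ : HasDerivAt (fun t : ℝ => -((t ^ 3)⁻¹)) (-(-(3 * x ^ 2) / (x ^ 3) ^ 2)) x := by
    exact ((hasDerivAt_pow 3 x).inv (pow_ne_zero 3 hx)).neg.congr_deriv (by norm_num)
  have hvZ : HasDerivAt (fun t : ℝ => t ^ 2 + ε / 3) (2 * y) y := by
    simpa using (hasDerivAt_pow 2 y).add_const (ε / 3)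
  have huK : HasDerivAt (fun t : ℝ => (t ^ 4)⁻¹) (-(4 * x ^ 3) / (x ^ 4) ^ 2) x := by
    exact ((hasDerivAt_pow 4 x).inv (pow_ne_zero 4 hx)).congr_deriv (by norm_num)
  have hvK : HasDerivAt (fun t : ℝ => t ^ 3 + ε * t) (3 * y ^ 2 + ε) y := by
    have := (hasDerivAt_pow 3 y).add ((hasDerivAt_id y).const_mul ε)
    exact this.congr_deriv (by norm_num)
  -- rewrite functions as products
  have hRfun : R = fun q : ℝ × ℝ => q.1⁻¹ * (Real.sqrt 2 * Real.sqrt (q.2 ^ 2 + ε)) := by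
    funext q; simp [R, div_eq_mul_inv]; ring
  have hZfun : Z = fun q : ℝ × ℝ => (-((q.1 ^ 3)⁻¹)) * (q.2 ^ 2 + ε / 3) := by
    funext q; simp [Z, div_eq_mul_inv]; ring
  have hKfun : K = fun q : ℝ × ℝ => ((q.1 ^ 4)⁻¹) * (q.2 ^ 3 + ε * q.2) := by
    funext q; simp [K, div_eq_mul_inv]; ring
  have hR := pd_mul (p := (x, y)) huR hvR
  have hZ := pd_mul (p := (x, y)) huZ hvZ
  have hK := pd_mul (p := (x, y)) huK hvK
  rw [hRfun, hZfun, hKfun]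
  rw [hR.1, hR.2, hZ.1, hZ.2, hK.1, hK.2]
  have hRval : R (x, y) = Real.sqrt 2 * Real.sqrt (y ^ 2 + ε) / x := rfl
  have e4 : Real.sqrt (y ^ 2 + ε) ^ 4 = (y ^ 2 + ε) ^ 2 := by
    rw [show (4 : ℕ) = 2 * 2 by rfl, pow_mul, hsq]
  have f4 : Real.sqrt 2 ^ 4 = 4 := by
    rw [show (4 : ℕ) = 2 * 2 by rfl, pow_mul, h2]; norm_num
  have e3 : Real.sqrt (y ^ 2 + ε) ^ 3 = (y ^ 2 + ε) * Real.sqrt (y ^ 2 + ε) := by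
    rw [pow_succ, hsq]
  refine ⟨?_, ?_, ?_, ?_⟩ <;>
    (field_simp; try ring_nf; try simp only [e4, f4, e3, hsq, h2]; try ring)
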